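/- Let c be a job-scheduling instance with m machines and n jobs and let A be a mean-efficient allocation. Define payments p by p_i := c_i(A_i) − (1/m)·c_i([n]) for each machine i. Then Σ_{i ∈ Fin m} p_i ≤ 0, and the mechanism (A, p) is proportional, i.e., for every machine i, c_i(A_i) − p_i ≤ (1/m)·Σ_{k ∈ Fin m} (c_i(A_k) − p_k). -/
import Mathlib


open Finset

noncomputable section

/-- The cost to machine `i` of the bundle of jobs assigned to machine `k` under allocation `A`. -/
def bundleCost {m n : ℕ} (c : Fin m → Fin n → ℝ) (A : Fin n → Fin m) (i k : Fin m) : ℝ :=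
  ∑ j ∈ Finset.univ.filter (fun j => A j = k), c i j

/-- The total cost to machine `i` of all jobs, `c_i([n])`. -/
def rowSum {m n : ℕ} (c : Fin m → Fin n → ℝ) (i : Fin m) : ℝ :=
  ∑ j, c i j

/-- For a mean-efficient allocation, the natural payments sum to at most 0 and make
the mechanism proportional. -/
theorem stmt_1 {m n : ℕ} (hm : 2 ≤ m) (hn : 2 ≤ n)
    (c : Fin m → Fin n → ℝ) (hc : ∀ i j, 0 ≤ c i j) (A : Fin n → Fin m)
    (hME : ∑ i : Fin m, bundleCost c A i i ≤ (1 / (m : ℝ)) * ∑ i : Fin m, rowSum c i)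
    (p : Fin m → ℝ)
    (hp : ∀ i : Fin m, p i = bundleCost c A i i - (1 / (m : ℝ)) * rowSum c i) :
    (∑ i : Fin m, p i ≤ 0) ∧
    ∀ i : Fin m,
      bundleCost c A i i - p i ≤ (1 / (m : ℝ)) * ∑ k : Fin m, (bundleCost c A i k - p k) := by
  have hm0 : (0:ℝ) < m := by positivity
  have hsum : ∀ i, ∑ k : Fin m, bundleCost c A i k = rowSum c i := by
    intro i
    rw [rowSum, ← Finset.sum_fiberwise (g := A) (f := fun j => c i j)]
    rfl
  have hpsum : ∑ i : Fin m, p i ≤ 0 := by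
    have : ∑ i : Fin m, p i
        = ∑ i : Fin m, bundleCost c A i i - (1 / (m : ℝ)) * ∑ i : Fin m, rowSum c i := by
      simp only [hp, Finset.sum_sub_distrib, Finset.mul_sum]
    linarith
  refine ⟨hpsum, fun i => ?_⟩
  have h1 : bundleCost c A i i - p i = (1 / (m : ℝ)) * rowSum c i := by
    rw [hp i]; ring
  have h2 : (1 / (m : ℝ)) * ∑ k : Fin m, (bundleCost c A i k - p k)
      = (1 / (m : ℝ)) * (rowSum c i - ∑ k : Fin m, p k) := by
    rw [Finset.sum_sub_distrib, hsum]
  rw [h1, h2]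
  have : 0 ≤ (1 / (m : ℝ)) := by positivity
  nlinarith
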